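/- The function R(t, k) defined by R(1, k) = 2k, R(t, 0) = 3 for t > 1, and R(t, k) = R(t, k−1) · R(t−1, R(t, k−1)) for k > 0, t > 1, satisfies A(t+2, j) > R(t, j) for all t, j ≥ 1, where A(1, j) = 2^j, A(i, 0) = 2 for i > 1, and A(i, j) = A(i−1, A(i, j−1)) for i > 1, j > 0. -/

import Mathlib

/-- The Ackermann-style function `A` with `A(1, j) = 2^j`, `A(i, 0) = 2` for
`i > 1`, and `A(i, j) = A(i−1, A(i, j−1))` for `i > 1, j > 0`. -/
def Afun : ℕ → ℕ → ℕ
  | 0, _ => 0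
  | 1, j => 2 ^ j
  | (_ + 2), 0 => 2
  | (i + 2), (j + 1) => Afun (i + 1) (Afun (i + 2) j)
termination_by i j => (i, j)

/-- The function `R` with `R(1, k) = 2k`, `R(t, 0) = 3` for `t > 1`, and
`R(t, k) = R(t, k−1) · R(t−1, R(t, k−1))` for `t > 1, k > 0`. -/
def Rfun : ℕ → ℕ → ℕ
  | 0, _ => 0
  | 1, k => 2 * k
  | (_ + 2), 0 => 3
  | (t + 2), (k + 1) => Rfun (t + 2) k * Rfun (t + 1) (Rfun (t + 2) k)
termination_by t k => (t, k)



lemma A_eq (i j : ℕ) : Afun (i + 2) (j + 1) = Afun (i + 1) (Afun (i + 2) j) := by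
  rw [Afun]

lemma A_zero (i : ℕ) : Afun (i + 2) 0 = 2 := by rw [Afun]

lemma R_eq (t k : ℕ) : Rfun (t + 2) (k + 1) = Rfun (t + 2) k * Rfun (t + 1) (Rfun (t + 2) k) := by
  rw [Rfun]

lemma R_zero (t : ℕ) : Rfun (t + 2) 0 = 3 := by rw [Rfun]

lemma sq_le_two_pow : ∀ n, 4 ≤ n → n * n ≤ 2 ^ n := by
  intro n hn
  induction n with
  | zero => omega
  | succ m IH =>
    rcases Nat.lt_or_ge m 4 with h | h
    · interval_cases m <;> simp_all <;> norm_num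
    · have := IH (by omega)
      have h2 : 2 ^ (m+1) = 2 ^ m + 2 ^ m := by ring
      nlinarith

lemma add_two_le_two_pow : ∀ n, 2 ≤ n → n + 2 ≤ 2 ^ n := by
  intro n hn
  induction n with
  | zero => omega
  | succ m IH =>
    rcases Nat.lt_or_ge m 2 with h | h
    · interval_cases m <;> simp_all <;> norm_num
    · have := IH h
      have h2 : 2 ^ (m+1) = 2 ^ m + 2 ^ m := by ring
      have : (2:ℕ) ≤ 2 ^ m := by have := Nat.lt_two_pow_self (n := m); omega
      omega

lemma two_mul_add_two_le_two_pow (n : ℕ) (hn : 3 ≤ n) : 2 * n + 2 ≤ 2 ^ n := by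
  rcases Nat.lt_or_ge n 4 with h | h
  · interval_cases n; norm_num
  · have := sq_le_two_pow n h
    nlinarith

lemma A_ge_two_pow : ∀ i j, 2 ^ j ≤ Afun (i + 1) j := by
  intro i
  induction i with
  | zero => intro j; simp [Afun]
  | succ i IH =>
    intro j
    induction j with
    | zero => rw [A_zero]; norm_num
    | succ j IHj =>
      rw [A_eq]
      have IHj' : 2 ^ j ≤ Afun (i + 2) j := IHj
      calc 2 ^ (j + 1) ≤ 2 ^ (Afun (i + 2) j) := by
            apply Nat.pow_le_pow_right (by norm_num)
            have := Nat.lt_two_pow_self (n := j)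
            omega
        _ ≤ Afun (i + 1) (Afun (i + 2) j) := IH _

lemma A_strictMono (i : ℕ) : StrictMono (Afun (i + 1)) := by
  apply strictMono_nat_of_lt_succ
  intro j
  cases i with
  | zero => simpa [Afun] using Nat.pow_lt_pow_right (by norm_num) (Nat.lt_succ_self j)
  | succ i =>
    rw [A_eq]
    calc Afun (i + 2) j < 2 ^ (Afun (i + 2) j) := Nat.lt_two_pow_self
      _ ≤ Afun (i + 1) (Afun (i + 2) j) := A_ge_two_pow _ _

lemma A_mono (i : ℕ) {j k : ℕ} (h : j ≤ k) : Afun (i + 1) j ≤ Afun (i + 1) k :=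
  (A_strictMono i).monotone h

lemma A_mono_i : ∀ i j, Afun (i + 1) j ≤ Afun (i + 2) j := by
  intro i j
  cases j with
  | zero =>
    cases i with
    | zero => simp [Afun, A_zero]
    | succ i => rw [A_zero, A_zero]
  | succ j =>
    rw [A_eq]
    apply A_mono
    have h1 : 2 ^ j ≤ Afun (i + 2) j := A_ge_two_pow (i + 1) j
    have h2 := Nat.lt_two_pow_self (n := j)
    omega

lemma A_mono_i' : ∀ i k j, i ≤ k → Afun (i + 1) j ≤ Afun (k + 1) j := by
  intro i k j h
  induction k with
  | zero => interval_cases i; rfl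
  | succ k IH =>
    rcases Nat.eq_or_lt_of_le h with rfl | h
    · rfl
    · exact le_trans (IH (by omega)) (A_mono_i k j)

lemma R_ge_three : ∀ t k, 3 ≤ Rfun (t + 2) k := by
  intro t
  induction t with
  | zero =>
    intro k
    induction k with
    | zero => rw [R_zero]
    | succ k IHk =>
      rw [R_eq]
      have IHk' : 3 ≤ Rfun 2 k := IHk
      have h0 : Rfun 1 (Rfun 2 k) = 2 * Rfun 2 k := by rw [Rfun]
      have : 1 ≤ Rfun (0 + 1) (Rfun (0 + 2) k) := by
        show 1 ≤ Rfun 1 (Rfun 2 k); omega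
      calc 3 ≤ Rfun (0 + 2) k * 1 := by have : Rfun (0+2) k = Rfun 2 k := rfl; omega
        _ ≤ _ := Nat.mul_le_mul_left _ this
  | succ t IH =>
    intro k
    induction k with
    | zero => rw [R_zero]
    | succ k IHk =>
      rw [R_eq]
      have IHk' : 3 ≤ Rfun (t + 1 + 2) k := IHk
      have : 1 ≤ Rfun (t + 1 + 1) (Rfun (t + 1 + 2) k) := by
        have : 3 ≤ Rfun (t + 2) (Rfun (t + 1 + 2) k) := IH _
        exact le_trans (by omega) this
      calc 3 ≤ Rfun (t + 1 + 2) k * 1 := by omega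
        _ ≤ _ := Nat.mul_le_mul_left _ this

lemma A_one (j : ℕ) : Afun 1 j = 2 ^ j := by rw [Afun]

lemma A22 : Afun 2 2 = 16 := by
  have h1 : Afun 2 2 = Afun 1 (Afun 2 1) := A_eq 0 1
  have h2 : Afun 2 1 = Afun 1 (Afun 2 0) := A_eq 0 0
  have h3 : Afun 2 0 = 2 := A_zero 0
  rw [h1, h2, h3, A_one, A_one]
  norm_num

lemma main_S : ∀ t k, 1 ≤ k → Rfun (t + 1) k < Afun (t + 2) (2 * k) := by
  intro t
  induction t with
  | zero =>
    intro k hk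
    show Rfun 1 k < Afun 2 (2 * k)
    have h1 : Rfun 1 k = 2 * k := by rw [Rfun]
    have h2 : 2 ^ (2 * k) ≤ Afun 2 (2 * k) := A_ge_two_pow 1 (2 * k)
    have h3 : 2 * k < 2 ^ (2 * k) := Nat.lt_two_pow_self
    omega
  | succ t IH =>
    intro k hk
    induction k with
    | zero => omega
    | succ k IHk =>
      rcases Nat.eq_zero_or_pos k with rfl | hkpos
      · -- base case k = 1
        have e1 : Rfun (t + 2) 1 = Rfun (t + 2) 0 * Rfun (t + 1) (Rfun (t + 2) 0) := R_eq t 0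
        have e2 : Rfun (t + 2) 0 = 3 := R_zero t
        rw [e1, e2]
        have h1 : Rfun (t + 1) 3 < Afun (t + 2) 6 := by
          have := IH 3 (by norm_num); simpa using this
        have hstep : 3 * Rfun (t + 1) 3 < 3 * Afun (t + 2) 6 := by omega
        have h64 : 64 ≤ Afun (t + 2) 6 := by
          have := A_ge_two_pow (t + 1) 6; norm_num at this; exact this
        -- 4 * A(t+2,6) ≤ 2 ^ A(t+2,6)
        have h4m : 4 * Afun (t + 2) 6 ≤ 2 ^ Afun (t + 2) 6 := by
          have hs := sq_le_two_pow (Afun (t + 2) 6) (by omega)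
          nlinarith
        have h7 : Afun (t + 2) 7 = Afun (t + 1) (Afun (t + 2) 6) := A_eq t 6
        have h7' : 2 ^ Afun (t + 2) 6 ≤ Afun (t + 1) (Afun (t + 2) 6) := A_ge_two_pow t _
        have h16 : 16 ≤ Afun (t + 2) 2 := by
          have := A_mono_i' 1 (t + 1) 2 (by omega)
          rw [A22] at this; exact this
        have h716 : Afun (t + 2) 7 ≤ Afun (t + 2) 16 := A_mono (t + 1) (by norm_num)
        have hfin : Afun (t + 2) 16 ≤ Afun (t + 2) (Afun (t + 2) 2) := A_mono (t + 1) h16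
        have etar : Afun (t + 3) 2 = Afun (t + 2) (Afun (t + 2) 2) := by
          have e3 : Afun (t + 3) 2 = Afun (t + 2) (Afun (t + 3) 1) := A_eq (t + 1) 1
          have e4 : Afun (t + 3) 1 = Afun (t + 2) (Afun (t + 3) 0) := A_eq (t + 1) 0
          have e5 : Afun (t + 3) 0 = 2 := A_zero (t + 1)
          rw [e3, e4, e5]
        have : 3 * Afun (t + 2) 6 < Afun (t + 3) 2 := by
          rw [etar]; omega
        calc 3 * Rfun (t + 1) 3 < 3 * Afun (t + 2) 6 := hstep
          _ < Afun (t + 3) (2 * 1) := this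
      · -- inductive step k ≥ 1
        have hr3 : 3 ≤ Rfun (t + 2) k := R_ge_three t k
        set r := Rfun (t + 2) k with hr
        set m := Afun (t + 3) (2 * k) with hm
        have hrm : r < m := IHk hkpos
        have e1 : Rfun (t + 2) (k + 1) = r * Rfun (t + 1) r := R_eq t k
        have h1 : Rfun (t + 1) r < Afun (t + 2) (2 * r) := IH r (by omega)
        have hstep : r * Rfun (t + 1) r < r * Afun (t + 2) (2 * r) :=
          mul_lt_mul_of_pos_left h1 (by omega)
        have hm4 : 4 ≤ m := by
          have h2 : 2 ^ (2 * k) ≤ m := A_ge_two_pow (t + 2) (2 * k)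
          have : 4 ≤ 2 ^ (2 * k) := by
            calc (4:ℕ) = 2 ^ 2 := by norm_num
              _ ≤ 2 ^ (2 * k) := Nat.pow_le_pow_right (by norm_num) (by omega)
          omega
        set n := Afun (t + 2) (2 * m) with hn
        have hc1 : r * Afun (t + 2) (2 * r) ≤ m * n := by
          apply Nat.mul_le_mul (by omega)
          exact A_mono (t + 1) (by omega)
        have hn_ge : 2 ^ (2 * m) ≤ n := A_ge_two_pow (t + 1) (2 * m)
        have hmn : m ≤ n := by
          have : 2 * m < 2 ^ (2 * m) := Nat.lt_two_pow_self
          omega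
        have hn4 : 4 ≤ n := by omega
        have hc2 : m * n ≤ 2 ^ n := le_trans (Nat.mul_le_mul_right n hmn) (sq_le_two_pow n hn4)
        have hc3 : 2 ^ n ≤ Afun (t + 2) (2 * m + 1) := by
          have e : Afun (t + 2) (2 * m + 1) = Afun (t + 1) (Afun (t + 2) (2 * m)) := A_eq t (2 * m)
          rw [e]
          exact A_ge_two_pow t n
        have hc4 : Afun (t + 2) (2 * m + 1) ≤ Afun (t + 2) (Afun (t + 2) m) := by
          apply A_mono (t + 1)
          have h2m : 2 ^ m ≤ Afun (t + 2) m := A_ge_two_pow (t + 1) m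
          have : 2 * m + 2 ≤ 2 ^ m := two_mul_add_two_le_two_pow m (by omega)
          omega
        have etar : Afun (t + 3) (2 * (k + 1)) = Afun (t + 2) (Afun (t + 2) m) := by
          have e3 : Afun (t + 3) (2 * k + 2) = Afun (t + 2) (Afun (t + 3) (2 * k + 1)) :=
            A_eq (t + 1) (2 * k + 1)
          have e4 : Afun (t + 3) (2 * k + 1) = Afun (t + 2) (Afun (t + 3) (2 * k)) :=
            A_eq (t + 1) (2 * k)
          have : 2 * (k + 1) = 2 * k + 2 := by ring
          rw [this, e3, e4, ← hm]
        rw [e1, etar]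
        calc r * Rfun (t + 1) r < r * Afun (t + 2) (2 * r) := hstep
          _ ≤ m * n := hc1
          _ ≤ 2 ^ n := hc2
          _ ≤ Afun (t + 2) (2 * m + 1) := hc3
          _ ≤ Afun (t + 2) (Afun (t + 2) m) := hc4


/-- `A(t+2, j) > R(t, j)` for all `t, j ≥ 1`. -/
theorem Afun_gt_Rfun (t j : ℕ) (ht : 1 ≤ t) (hj : 1 ≤ j) :
    Rfun t j < Afun (t + 2) j := by
  obtain ⟨s, rfl⟩ : ∃ s, t = s + 1 := ⟨t - 1, by omega⟩
  obtain ⟨i, rfl⟩ : ∃ i, j = i + 1 := ⟨j - 1, by omega⟩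
  have hS : Rfun (s + 1) (i + 1) < Afun (s + 2) (2 * (i + 1)) := main_S s (i + 1) (by omega)
  have hA3 : ∀ n, 2 * n + 2 ≤ Afun 3 n := by
    intro n
    induction n with
    | zero => rw [A_zero]
    | succ n IHn =>
      have e : Afun 3 (n + 1) = Afun 2 (Afun 3 n) := A_eq 1 n
      rw [e]
      have h1 : 2 ^ (Afun 3 n) ≤ Afun 2 (Afun 3 n) := A_ge_two_pow 1 _
      have h2 : Afun 3 n + 2 ≤ 2 ^ (Afun 3 n) := add_two_le_two_pow _ (by omega)
      omega
  have hch : 2 * (i + 1) ≤ Afun (s + 3) i := by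
    have h1 : Afun 3 i ≤ Afun (s + 3) i := by
      have := A_mono_i' 2 (s + 2) i (by omega)
      exact this
    have := hA3 i
    omega
  have etar : Afun (s + 3) (i + 1) = Afun (s + 2) (Afun (s + 3) i) := A_eq (s + 1) i
  calc Rfun (s + 1) (i + 1) < Afun (s + 2) (2 * (i + 1)) := hS
    _ ≤ Afun (s + 2) (Afun (s + 3) i) := A_mono (s + 1) hch
    _ = Afun (s + 3) (i + 1) := etar.symm
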